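/- arXiv:1409.7044 — 8 statements merged into one kernel-verified Lean document; each statement's English description precedes it below -/
import Mathlib

section
/- If S ⊆ Bin(X) is a distributive set (every pair ∗α, ∗β ∈ S, allowing ∗α = ∗β, satisfies (a∗α b)∗β c = (a∗β c)∗α(b∗β c)) and ∗ ∈ S is invertible in the monoid Bin(X), then S ∪ {∗⁻¹} is also a distributive set. -/
/-- Binary operations on `X`. -/
def BinOp (X : Type*) : Type _ := X → X → X

/-- Composition in `Bin X`: `a (∗₁∗₂) b = (a ∗₁ b) ∗₂ b`. -/
def binComp {X : Type*} (f g : BinOp X) : BinOp X := fun a b => g (f a b) b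

/-- The right-trivial operation `a ∗₀ b = a`. -/
def binId (X : Type*) : BinOp X := fun a _ => a

/-- `S` is a distributive set: every pair of its elements (including equal ones) satisfies
mutual right distributivity `(a ∗α b) ∗β c = (a ∗β c) ∗α (b ∗β c)`. -/
def IsDistribSet {X : Type*} (S : Set (BinOp X)) : Prop :=
  ∀ f ∈ S, ∀ g ∈ S, ∀ a b c : X, g (f a b) c = f (g a c) (g b c)

/-- If `S ⊆ Bin(X)` is a distributive set and `∗ ∈ S` is invertible in the monoid `Bin(X)`,
then `S ∪ {∗⁻¹}` is also a distributive set. -/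
theorem stmt2 {X : Type*} (S : Set (BinOp X)) (hS : IsDistribSet S)
    (f finv : BinOp X) (hf : f ∈ S)
    (hinv₁ : binComp f finv = binId X) (hinv₂ : binComp finv f = binId X) :
    IsDistribSet (S ∪ {finv}) := by
  have h1 : ∀ a b, finv (f a b) b = a := fun a b => congrFun (congrFun hinv₁ a) b
  have h2 : ∀ a b, f (finv a b) b = a := fun a b => congrFun (congrFun hinv₂ a) b
  have finj : ∀ b : X, Function.Injective (fun x => f x b) := by
    intro b x y h
    have := congrArg (fun z => finv z b) h
    simpa [h1] using this
  have key2 : ∀ g ∈ S, ∀ a b c, finv (g a b) c = g (finv a c) (finv b c) := by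
    intro g hg a b c
    apply finj c
    simp only
    rw [hS g hg f hf, h2, h2, h2]
  have key3 : ∀ h ∈ S, ∀ a b c, h (finv a b) c = finv (h a c) (h b c) := by
    intro h hh a b c
    have h3 := hS f hf h hh (finv a b) b c
    rw [h2] at h3
    rw [h3, h1]
  have key4 : ∀ a b c, finv (finv a b) c = finv (finv a c) (finv b c) := by
    intro a b c
    apply finj (finv b c)
    simp only
    rw [h2]
    have h4 := key2 f hf (finv a b) b c
    rw [h2] at h4
    rw [← h4]
  intro g hg h hh a b c
  rcases hg with hg | hg <;> rcases hh with hh | hh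
  · exact hS g hg h hh a b c
  · rw [Set.mem_singleton_iff] at hh; subst hh; exact key2 g hg a b c
  · rw [Set.mem_singleton_iff] at hg; subst hg; exact key3 h hh a b c
  · rw [Set.mem_singleton_iff] at hg; subst hg
    rw [Set.mem_singleton_iff] at hh; subst hh
    exact key4 a b c
end

section
/- If S ⊆ Bin(X) is a distributive set, then the submonoid M(S) of Bin(X) generated by S is also a distributive set (a distributive monoid). -/
/-- The monoid `Bin(X)` with composition `a(∗₁∗₂)b = (a∗₁b)∗₂b` and identity `a∗₀b = a`. -/
instance {X : Type*} : Monoid (BinOp X) where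
  mul f g := fun a b => g (f a b) b
  one := fun a _ => a
  mul_assoc _ _ _ := rfl
  one_mul _ := rfl
  mul_one _ := rfl

lemma distrib_one_left {X : Type*} (g : BinOp X) :
    ∀ a b c : X, g ((1 : BinOp X) a b) c = (1 : BinOp X) (g a c) (g b c) :=
  fun _ _ _ => rfl

/-- If `S ⊆ Bin(X)` is a distributive set, then the submonoid `M(S)` of `Bin(X)` generated
by `S` is also a distributive set (a distributive monoid). -/
theorem stmt3 {X : Type*} (S : Set (BinOp X)) (hS : IsDistribSet S) :
    IsDistribSet (Submonoid.closure S : Set (BinOp X)) := by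
  intro f hf
  induction hf using Submonoid.closure_induction with
  | one => exact fun g _ => distrib_one_left g
  | mem x hx =>
    intro g hg
    induction hg using Submonoid.closure_induction with
    | mem y hy => exact hS x hx y hy
    | one => intro a b c; rfl
    | mul y z hy hz ihy ihz =>
      intro a b c
      show z (y (x a b) c) c = x (z (y a c) c) (z (y b c) c)
      rw [ihy, ihz]
  | mul x y hx hy ihx ihy =>
    intro g hg a b c
    show g (y (x a b) b) c = y (x (g a c) (g b c)) (g b c)
    rw [ihy g hg, ihx g hg]
end

section
/- If S ⊆ Bin(X) is an entropic set and ∗ ∈ S is invertible in the monoid Bin(X), then S ∪ {∗⁻¹} is also an entropic set. -/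
/-- `S` is an entropic set: any pair `∗α, ∗β ∈ S` (possibly equal) satisfies
`(a ∗α b) ∗β (c ∗α d) = (a ∗β c) ∗α (b ∗β d)`. -/
def IsEntropicSet {X : Type*} (S : Set (BinOp X)) : Prop :=
  ∀ f ∈ S, ∀ g ∈ S, ∀ a b c d : X, g (f a b) (f c d) = f (g a c) (g b d)

/-- If `S ⊆ Bin(X)` is an entropic set and `∗ ∈ S` is invertible in the monoid `Bin(X)`,
then `S ∪ {∗⁻¹}` is also an entropic set. -/
theorem stmt4 {X : Type*} (S : Set (BinOp X)) (hS : IsEntropicSet S)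
    (f finv : BinOp X) (hf : f ∈ S)
    (hinv₁ : binComp f finv = binId X) (hinv₂ : binComp finv f = binId X) :
    IsEntropicSet (S ∪ {finv}) := by
  have h1 : ∀ a b : X, finv (f a b) b = a := fun a b => congrFun (congrFun hinv₁ a) b
  have h2 : ∀ a b : X, f (finv a b) b = a := fun a b => congrFun (congrFun hinv₂ a) b
  have injf : ∀ p p' q : X, f p q = f p' q → p = p' := by
    intro p p' q h
    rw [← h1 p q, h, h1]
  have case2 : ∀ g ∈ S, ∀ a b c d : X,
      finv (g a b) (g c d) = g (finv a c) (finv b d) := by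
    intro g hg a b c d
    apply injf _ _ (g c d)
    rw [h2, hS g hg f hf (finv a c) (finv b d) c d, h2, h2]
  have case3 : ∀ g ∈ S, ∀ a b c d : X,
      g (finv a b) (finv c d) = finv (g a c) (g b d) := by
    intro g hg a b c d
    apply injf _ _ (g b d)
    rw [h2, hS g hg f hf (finv a b) (finv c d) b d, h2, h2]
  have case4 : ∀ a b c d : X,
      finv (finv a b) (finv c d) = finv (finv a c) (finv b d) := by
    intro a b c d
    apply injf _ _ (finv c d)
    rw [h2, ← case2 f hf (finv a c) c (finv b d) d, h2, h2]
  intro g hg h hh a b c d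
  rcases hg with hg | hg <;> rcases hh with hh | hh
  · exact hS g hg h hh a b c d
  · rw [Set.mem_singleton_iff] at hh; subst hh; exact case2 g hg a b c d
  · rw [Set.mem_singleton_iff] at hg; subst hg; exact case3 h hh a b c d
  · rw [Set.mem_singleton_iff] at hg hh; subst hg hh
    exact case4 a b c d
end

section
/- If S ⊆ Bin(X) is an entropic set, then the submonoid of Bin(X) generated by S is also entropic. -/
/-- If `S ⊆ Bin(X)` is an entropic set, then the submonoid of `Bin(X)` generated by `S`
is also entropic. -/
theorem stmt5 {X : Type*} (S : Set (BinOp X)) (hS : IsEntropicSet S) :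
    IsEntropicSet (Submonoid.closure S : Set (BinOp X)) := by
  have key : ∀ g ∈ Submonoid.closure S, ∀ f ∈ Submonoid.closure S,
      ∀ a b c d : X, g (f a b) (f c d) = f (g a c) (g b d) := by
    intro g hg
    induction hg using Submonoid.closure_induction with
    | mem g hgS =>
      intro f hf
      induction hf using Submonoid.closure_induction with
      | mem f hfS => exact hS f hfS g hgS
      | one => intro a b c d; rfl
      | mul f f' _ _ ihf ihf' =>
        intro a b c d
        show g (f' (f a b) b) (f' (f c d) d) = f' (f (g a c) (g b d)) (g b d)
        rw [ihf' (f a b) b (f c d) d, ihf]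
    | one => intro f hf a b c d; rfl
    | mul g g' _ _ ihg ihg' =>
      intro f hf a b c d
      show g' (g (f a b) (f c d)) (f c d) = f (g' (g a c) c) (g' (g b d) d)
      rw [ihg f hf, ihg' f hf]
  intro f hf g hg
  exact key g hg f hf
end

section
/- In a multi-quandle (in fact in any multi-rack with idempotent operations closed under pairwise distributivity), any two operations of a distributive set S in which every element is idempotent-and-invertible commute in Bin(X); consequently, if ∗₁ⁿ = ∗₀ and ∗₂ⁿ = ∗₀ then (∗₁∗₂)ⁿ = ∗₀. -/
/-- In a multi-quandle (a distributive set `S` all of whose elements are invertible and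
idempotent), any two operations of `S` commute in `Bin(X)`; consequently if
`∗₁ⁿ = ∗₀` and `∗₂ⁿ = ∗₀` then `(∗₁∗₂)ⁿ = ∗₀`. -/
theorem stmt6 {X : Type*} (S : Set (BinOp X)) (hS : IsDistribSet S)
    (hinv : ∀ f ∈ S, ∃ g : BinOp X, f * g = 1 ∧ g * f = 1)
    (hidem : ∀ f ∈ S, ∀ a : X, f a a = a) :
    (∀ f ∈ S, ∀ g ∈ S, f * g = g * f) ∧
    (∀ f ∈ S, ∀ g ∈ S, ∀ n : ℕ, f ^ n = 1 → g ^ n = 1 → (f * g) ^ n = 1) := by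
  have hc : ∀ f ∈ S, ∀ g ∈ S, f * g = g * f := by
    intro f hf g hg
    funext a b
    show g (f a b) b = f (g a b) b
    rw [hS f hf g hg a b b, hidem g hg b]
  refine ⟨hc, ?_⟩
  intro f hf g hg n h1 h2
  rw [Commute.mul_pow (hc f hf g hg), h1, h2, one_mul]
end

section
/- For any group G, the map g ↦ ∗g, where a ∗g b = a b⁻¹ g b, is an injective monoid homomorphism from G into Bin(G); moreover its image is a distributive set, so G embeds as a distributive group of binary operations on itself. -/
/-- Half-conjugacy: `a ∗g b = a·b⁻¹·g·b`. -/
def halfConj {G : Type*} [Group G] (g : G) : BinOp G := fun a b => a * b⁻¹ * g * b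

/-- For any group `G`, the map `g ↦ ∗g`, `a ∗g b = a b⁻¹ g b`, is an injective monoid
homomorphism from `G` into `Bin(G)`, and its image is a distributive set: so `G` embeds
as a distributive group of binary operations on itself. -/
theorem stmt7 (G : Type*) [Group G] :
    (∀ g h : G, binComp (halfConj g) (halfConj h) = halfConj (g * h)) ∧
    (halfConj (1 : G) = binId G) ∧
    (Function.Injective (halfConj (G := G))) ∧
    (∀ g h : G, ∀ a b c : G,
      halfConj h (halfConj g a b) c = halfConj g (halfConj h a c) (halfConj h b c)) := by
  refine ⟨?_, ?_, ?_, ?_⟩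
  · intro g h; funext a b; simp [binComp, halfConj, mul_assoc]
  · funext a b; simp [halfConj, binId, mul_assoc]
  · intro g h hgh
    have := congrFun (congrFun hgh 1) 1
    simpa [halfConj] using this
  · intro g h a b c; simp only [halfConj]; group
end

section
/- Let (Cₙ, dᵢ, sᵢ) be a simplicial module (satisfying in particular (2'') s_{p−1}s_{p−1} = sₚs_{p−1}, (3), and (4) dᵢsᵢ = d_{i+1}sᵢ = Id). Then (∂sₚ + sₚ∂)sₚ ≡ (−1)ᵖ sₚ modulo the submodule 2·s_{p−1}(C_{n−1}) + s_{p−1}(C_{n−1}), i.e. sₚ is a chain homotopy between (−1)ᵖId and 0 on the graded piece F^p/F^{p−1} of the degenerate filtration; consequently each graded piece F^p/F^{p−1} is acyclic, and the degenerate subcomplex (C^D_n, ∂) is acyclic (Eilenberg–Mac Lane). -/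
/-- The boundary `∂ₙ = Σ_{i=0}^{n+1} (−1)ⁱ dᵢ : C_{n+1} → Cₙ` of a family of face maps. -/
noncomputable def sBdry {k : Type*} [CommRing k] {C : ℕ → Type*}
    [∀ n, AddCommGroup (C n)] [∀ n, Module k (C n)]
    (d : ∀ n, ℕ → (C (n + 1) →ₗ[k] C n)) (n : ℕ) : C (n + 1) →ₗ[k] C n :=
  ∑ i ∈ Finset.range (n + 2), ((-1 : k) ^ i) • d n i

section Aux
variable {k : Type*} [CommRing k] {C : ℕ → Type*}
    [∀ n, AddCommGroup (C n)] [∀ n, Module k (C n)]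
    (d : ∀ n, ℕ → (C (n + 1) →ₗ[k] C n))
    (s : ∀ n, ℕ → (C n →ₗ[k] C (n + 1)))

lemma sBdry_apply (n : ℕ) (x : C (n + 1)) :
    sBdry d n x = ∑ i ∈ Finset.range (n + 2), ((-1 : k) ^ i) • d n i x := by
  simp [sBdry]

lemma bdry_bdry
    (hd : ∀ n, ∀ i j : ℕ, i < j → j ≤ n + 2 →
      (d n i) ∘ₗ (d (n + 1) j) = (d n (j - 1)) ∘ₗ (d (n + 1) i))
    (n : ℕ) (x : C (n + 2)) :
    sBdry d n (sBdry d (n + 1) x) = 0 := by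
  simp only [sBdry_apply, map_sum, map_smul, Finset.smul_sum]
  rw [← Finset.sum_product']
  rw [← Finset.sum_filter_add_sum_filter_not _ (fun ij : ℕ × ℕ => ij.2 < ij.1)]
  have key : ∑ ij ∈ (Finset.range (n+1+2) ×ˢ Finset.range (n+2)).filter
        (fun ij : ℕ × ℕ => ij.2 < ij.1),
        ((-1:k)^ij.1 • ((-1:k)^ij.2 • d n ij.2 (d (n+1) ij.1 x)))
      = ∑ ij ∈ (Finset.range (n+1+2) ×ˢ Finset.range (n+2)).filter
        (fun ij : ℕ × ℕ => ¬ ij.2 < ij.1),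
        (-((-1:k)^ij.1 • ((-1:k)^ij.2 • d n ij.2 (d (n+1) ij.1 x)))) := by
    refine Finset.sum_nbij' (fun ij => (ij.2, ij.1 - 1)) (fun ij => (ij.2 + 1, ij.1)) ?_ ?_ ?_ ?_ ?_
    · rintro ⟨j, i⟩ h
      simp only [Finset.mem_filter, Finset.mem_product, Finset.mem_range] at h ⊢
      omega
    · rintro ⟨j, i⟩ h
      simp only [Finset.mem_filter, Finset.mem_product, Finset.mem_range] at h ⊢
      omega
    · rintro ⟨j, i⟩ h
      simp only [Finset.mem_filter, Finset.mem_product, Finset.mem_range] at h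
      dsimp only
      simp only [Prod.mk.injEq, and_true, true_and]
      omega
    · rintro ⟨j, i⟩ h
      simp only [Finset.mem_filter, Finset.mem_product, Finset.mem_range] at h
      dsimp only
      simp only [Prod.mk.injEq, and_true, true_and]
      omega
    · rintro ⟨j, i⟩ h
      simp only [Finset.mem_filter, Finset.mem_product, Finset.mem_range] at h
      obtain ⟨⟨hj, hi⟩, hlt⟩ := h
      obtain ⟨j', rfl⟩ : ∃ j', j = j' + 1 := ⟨j - 1, by omega⟩
      have hij : d n i (d (n+1) (j'+1) x) = d n j' (d (n+1) i x) := by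
        simpa using LinearMap.congr_fun (hd n i (j'+1) hlt (by omega)) x
      simp only [Nat.add_sub_cancel]
      rw [smul_smul, smul_smul, hij, ← neg_smul]
      congr 1
      ring
  rw [key]
  simp


lemma homotopy_formula
    (hds_lt : ∀ n, ∀ i j : ℕ, i < j → j ≤ n + 1 →
      (d (n + 1) i) ∘ₗ (s (n + 1) j) = (s n (j - 1)) ∘ₗ (d n i))
    (hds_gt : ∀ n, ∀ i j : ℕ, j + 1 < i → i ≤ n + 2 →
      (d (n + 1) i) ∘ₗ (s (n + 1) j) = (s n j) ∘ₗ (d n (i - 1)))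
    (hds_id : ∀ n, ∀ i : ℕ, i ≤ n + 1 →
      (d (n + 1) i) ∘ₗ (s (n + 1) i) = LinearMap.id ∧
      (d (n + 1) (i + 1)) ∘ₗ (s (n + 1) i) = LinearMap.id)
    (n p : ℕ) (hp : p ≤ n + 1) (x : C (n + 1)) :
    sBdry d (n + 1) (s (n + 1) p x) + s n p (sBdry d n x) =
      (∑ i ∈ Finset.range p, ((-1 : k) ^ i) • s n (p - 1) (d n i x)) +
      (∑ i ∈ Finset.range (p + 1), ((-1 : k) ^ i) • s n p (d n i x)) := by
  have e1 : sBdry d (n + 1) (s (n + 1) p x)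
      = (∑ i ∈ Finset.range p, ((-1 : k) ^ i) • s n (p - 1) (d n i x))
        + ∑ i ∈ Finset.range (n + 1 - p),
            ((-1 : k) ^ (p + 2 + i)) • s n p (d n (p + 1 + i) x) := by
    rw [sBdry_apply]
    have hsplit : ∑ i ∈ Finset.range (n + 1 + 2), ((-1:k)^i) • d (n+1) i (s (n+1) p x)
        = (∑ i ∈ Finset.range (p+2), ((-1:k)^i) • d (n+1) i (s (n+1) p x))
          + ∑ i ∈ Finset.Ico (p+2) (n+1+2), ((-1:k)^i) • d (n+1) i (s (n+1) p x) := by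
      simp only [Finset.range_eq_Ico]
      exact (Finset.sum_Ico_consecutive _ (by omega) (by omega)).symm
    rw [hsplit, Finset.sum_range_succ, Finset.sum_range_succ]
    have hid1 : d (n+1) p (s (n+1) p x) = x :=
      by simpa using LinearMap.congr_fun (hds_id n p hp).1 x
    have hid2 : d (n+1) (p+1) (s (n+1) p x) = x :=
      by simpa using LinearMap.congr_fun (hds_id n p hp).2 x
    rw [hid1, hid2]
    have hcancel : ((-1:k)^p) • x + ((-1:k)^(p+1)) • x = 0 := by
      rw [pow_succ, mul_neg_one, neg_smul, add_neg_cancel]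
    have hfst : ∀ i ∈ Finset.range p, ((-1:k)^i) • d (n+1) i (s (n+1) p x)
        = ((-1:k)^i) • s n (p-1) (d n i x) := by
      intro i hi
      rw [Finset.mem_range] at hi
      congr 1
      exact LinearMap.congr_fun (hds_lt n i p hi hp) x
    rw [Finset.sum_congr rfl hfst]
    have htail : ∑ i ∈ Finset.Ico (p+2) (n+1+2), ((-1:k)^i) • d (n+1) i (s (n+1) p x)
        = ∑ i ∈ Finset.range (n + 1 - p), ((-1:k)^(p+2+i)) • s n p (d n (p+1+i) x) := by
      rw [Finset.sum_Ico_eq_sum_range,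
        show n + 1 + 2 - (p + 2) = n + 1 - p from by omega]
      refine Finset.sum_congr rfl ?_
      intro i hi
      rw [Finset.mem_range] at hi
      congr 1
      have := LinearMap.congr_fun
        (hds_gt n (p+2+i) p (by omega) (by omega)) x
      simpa [show p + 2 + i - 1 = p + 1 + i by omega] using this
    rw [htail, add_assoc (∑ i ∈ Finset.range p, ((-1:k)^i) • s n (p-1) (d n i x)),
      hcancel, add_zero]
  have e2 : s n p (sBdry d n x)
      = (∑ i ∈ Finset.range (p + 1), ((-1 : k) ^ i) • s n p (d n i x))
        + ∑ i ∈ Finset.range (n + 1 - p),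
            ((-1 : k) ^ (p + 1 + i)) • s n p (d n (p + 1 + i) x) := by
    rw [sBdry_apply, map_sum]
    simp only [map_smul]
    have hsplit : ∑ i ∈ Finset.range (n + 2), ((-1:k)^i) • s n p (d n i x)
        = (∑ i ∈ Finset.range (p+1), ((-1:k)^i) • s n p (d n i x))
          + ∑ i ∈ Finset.Ico (p+1) (n+2), ((-1:k)^i) • s n p (d n i x) := by
      simp only [Finset.range_eq_Ico]
      exact (Finset.sum_Ico_consecutive _ (by omega) (by omega)).symm
    rw [hsplit, Finset.sum_Ico_eq_sum_range,
      show n + 2 - (p + 1) = n + 1 - p from by omega]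
  have hT : (∑ i ∈ Finset.range (n + 1 - p),
        ((-1 : k) ^ (p + 2 + i)) • s n p (d n (p + 1 + i) x))
      + ∑ i ∈ Finset.range (n + 1 - p),
        ((-1 : k) ^ (p + 1 + i)) • s n p (d n (p + 1 + i) x) = 0 := by
    rw [← Finset.sum_add_distrib]
    refine Finset.sum_eq_zero ?_
    intro i hi
    rw [show p + 2 + i = (p + 1 + i) + 1 from by omega, pow_succ, mul_neg_one,
      neg_smul, neg_add_cancel]
  rw [e1, e2, add_add_add_comm, hT, add_zero]

lemma part1
    (hs : ∀ n, ∀ i j : ℕ, i ≤ j → j ≤ n →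
      (s (n + 1) i) ∘ₗ (s n j) = (s (n + 1) (j + 1)) ∘ₗ (s n i))
    (hds_lt : ∀ n, ∀ i j : ℕ, i < j → j ≤ n + 1 →
      (d (n + 1) i) ∘ₗ (s (n + 1) j) = (s n (j - 1)) ∘ₗ (d n i))
    (hds_gt : ∀ n, ∀ i j : ℕ, j + 1 < i → i ≤ n + 2 →
      (d (n + 1) i) ∘ₗ (s (n + 1) j) = (s n j) ∘ₗ (d n (i - 1)))
    (hds_id : ∀ n, ∀ i : ℕ, i ≤ n + 1 →
      (d (n + 1) i) ∘ₗ (s (n + 1) i) = LinearMap.id ∧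
      (d (n + 1) (i + 1)) ∘ₗ (s (n + 1) i) = LinearMap.id)
    (n p : ℕ) (hp : p ≤ n) (x : C n) :
    ((sBdry d (n + 1)) ((s (n + 1) p) ((s n p) x)) +
        (s n p) ((sBdry d n) ((s n p) x))) - ((-1 : k) ^ p) • ((s n p) x) ∈
      LinearMap.range (s n (p - 1)) := by
  rw [homotopy_formula d s hds_lt hds_gt hds_id n p (by omega) (s n p x)]
  rcases p with _ | q
  · simp only [Finset.range_zero, Finset.sum_empty, zero_add, pow_zero, one_smul,
      Finset.sum_range_one, Nat.zero_sub]
    exact Submodule.sub_mem _ ⟨_, rfl⟩ ⟨x, rfl⟩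
  · rcases n with _ | m
    · omega
    simp only [Nat.add_sub_cancel]
    rw [Finset.sum_range_succ
      (fun i => ((-1:k)^i) • s (m+1) (q+1) (d (m+1) i (s (m+1) (q+1) x))) (q+1)]
    have hid : d (m + 1) (q + 1) (s (m + 1) (q + 1) x) = x := by
      simpa using LinearMap.congr_fun (hds_id m (q + 1) (by omega)).1 x
    rw [hid, ← add_assoc, add_sub_cancel_right]
    have hin : ∀ i, i < q + 1 →
        d (m + 1) i (s (m + 1) (q + 1) x) = s m q (d m i x) := by
      intro i hi
      simpa using LinearMap.congr_fun (hds_lt m i (q + 1) hi (by omega)) x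
    refine Submodule.add_mem _ (Submodule.sum_mem _ ?_) (Submodule.sum_mem _ ?_)
    · intro i hi
      rw [Finset.mem_range] at hi
      rw [hin i hi]
      exact Submodule.smul_mem _ _ ⟨_, rfl⟩
    · intro i hi
      rw [Finset.mem_range] at hi
      rw [hin i hi]
      have hswap : s (m + 1) (q + 1) (s m q (d m i x))
          = s (m + 1) q (s m q (d m i x)) :=
        (LinearMap.congr_fun (hs m q q le_rfl (by omega)) (d m i x)).symm
      rw [hswap]
      exact Submodule.smul_mem _ _ ⟨_, rfl⟩

lemma part2
    (hd : ∀ n, ∀ i j : ℕ, i < j → j ≤ n + 2 →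
      (d n i) ∘ₗ (d (n + 1) j) = (d n (j - 1)) ∘ₗ (d (n + 1) i))
    (hs : ∀ n, ∀ i j : ℕ, i ≤ j → j ≤ n →
      (s (n + 1) i) ∘ₗ (s n j) = (s (n + 1) (j + 1)) ∘ₗ (s n i))
    (hds_lt : ∀ n, ∀ i j : ℕ, i < j → j ≤ n + 1 →
      (d (n + 1) i) ∘ₗ (s (n + 1) j) = (s n (j - 1)) ∘ₗ (d n i))
    (hds_gt : ∀ n, ∀ i j : ℕ, j + 1 < i → i ≤ n + 2 →
      (d (n + 1) i) ∘ₗ (s (n + 1) j) = (s n j) ∘ₗ (d n (i - 1)))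
    (hds_id : ∀ n, ∀ i : ℕ, i ≤ n + 1 →
      (d (n + 1) i) ∘ₗ (s (n + 1) i) = LinearMap.id ∧
      (d (n + 1) (i + 1)) ∘ₗ (s (n + 1) i) = LinearMap.id)
    (n : ℕ) (x : C (n + 1))
    (hx : x ∈ (⨆ i ∈ Finset.range (n + 1), LinearMap.range (s n i)))
    (hbx : sBdry d n x = 0) :
    ∃ y ∈ (⨆ i ∈ Finset.range (n + 2), LinearMap.range (s (n + 1) i)),
      sBdry d (n + 1) y = x := by
  have hmemG : ∀ j, j < n + 2 → LinearMap.range (s (n + 1) j) ≤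
      (⨆ i ∈ Finset.range (n + 2), LinearMap.range (s (n + 1) i)) := by
    intro j hj
    exact le_iSup₂ (f := fun i (_ : i ∈ Finset.range (n + 2)) =>
      LinearMap.range (s (n + 1) i)) j (Finset.mem_range.2 hj)
  have hmemF : ∀ p j : ℕ, j < p + 1 → LinearMap.range (s n j) ≤
      (⨆ i ∈ Finset.range (p + 1), LinearMap.range (s n i)) := by
    intro p j hj
    exact le_iSup₂ (f := fun i (_ : i ∈ Finset.range (p + 1)) =>
      LinearMap.range (s n i)) j (Finset.mem_range.2 hj)
  have key : ∀ p : ℕ, p ≤ n → ∀ x : C (n + 1),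
      x ∈ (⨆ i ∈ Finset.range (p + 1), LinearMap.range (s n i)) →
      sBdry d n x = 0 →
      ∃ y ∈ (⨆ i ∈ Finset.range (n + 2), LinearMap.range (s (n + 1) i)),
        sBdry d (n + 1) y = x := by
    intro p
    induction p with
    | zero =>
      intro _ x hx hbx
      have h0 : (⨆ i ∈ Finset.range (0 + 1), LinearMap.range (s n i))
          = LinearMap.range (s n 0) := by
        simp
      rw [h0] at hx
      obtain ⟨z, hz⟩ := hx
      refine ⟨s (n + 1) 0 x, hmemG 0 (by omega) ⟨x, rfl⟩, ?_⟩
      have hf := homotopy_formula d s hds_lt hds_gt hds_id n 0 (by omega) x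
      rw [hbx, map_zero, add_zero] at hf
      simp only [Finset.range_zero, Finset.sum_empty, zero_add,
        Finset.sum_range_one, pow_zero, one_smul, Nat.zero_sub] at hf
      rw [hf]
      -- show s n 0 (d n 0 x) = x
      have h1 : s (n + 1) 0 x = s (n + 1) 1 x := by
        rw [← hz]
        exact LinearMap.congr_fun (hs n 0 0 le_rfl (Nat.zero_le n)) z
      have h2 : d (n + 1) 0 (s (n + 1) 0 x) = x := by
        simpa using LinearMap.congr_fun (hds_id n 0 (by omega)).1 x
      have h3 : d (n + 1) 0 (s (n + 1) 1 x) = s n 0 (d n 0 x) := by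
        simpa using LinearMap.congr_fun (hds_lt n 0 1 (by omega) (by omega)) x
      rw [← h3, ← h1, h2]
    | succ q IH =>
      intro hp x hx hbx
      obtain ⟨m, rfl⟩ : ∃ m, n = m + 1 := ⟨n - 1, by omega⟩
      set c : k := (-1 : k) ^ (q + 1) with hc
      have hcc : c * c = 1 := by
        rw [hc, ← pow_add]
        exact Even.neg_one_pow ⟨q + 1, by ring⟩
      set S1 : C ((m + 1) + 1) := ∑ i ∈ Finset.range (q + 1),
        ((-1 : k) ^ i) • s (m + 1) q (d (m + 1) i x) with hS1
      set S2 : C ((m + 1) + 1) := ∑ i ∈ Finset.range (q + 2),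
        ((-1 : k) ^ i) • s (m + 1) (q + 1) (d (m + 1) i x) with hS2
      have hB : sBdry d ((m + 1) + 1) (s ((m + 1) + 1) (q + 1) x) = S1 + S2 := by
        have hf := homotopy_formula d s hds_lt hds_gt hds_id (m + 1) (q + 1) (by omega) x
        rw [hbx, map_zero, add_zero] at hf
        simpa [Nat.add_sub_cancel] using hf
      -- the linear operator x ↦ x - c • S2(x)
      set L : C ((m + 1) + 1) →ₗ[k] C ((m + 1) + 1) :=
        LinearMap.id - c • (∑ i ∈ Finset.range (q + 2),
          ((-1 : k) ^ i) • ((s (m + 1) (q + 1)) ∘ₗ (d (m + 1) i))) with hL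
      have hLapply : ∀ z : C ((m + 1) + 1), L z
          = z - c • ∑ i ∈ Finset.range (q + 2), ((-1 : k) ^ i) • s (m + 1) (q + 1) (d (m + 1) i z) := by
        intro z
        simp [hL, LinearMap.sum_apply, Finset.smul_sum]
      -- L maps F (q+1) into F q
      have hLF : ∀ z : C ((m + 1) + 1),
          z ∈ (⨆ i ∈ Finset.range (q + 2), LinearMap.range (s (m + 1) i)) →
          L z ∈ (⨆ i ∈ Finset.range (q + 1), LinearMap.range (s (m + 1) i)) := by
        have hle : (⨆ i ∈ Finset.range (q + 2), LinearMap.range (s (m + 1) i)) ≤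
            Submodule.comap L (⨆ i ∈ Finset.range (q + 1), LinearMap.range (s (m + 1) i)) := by
          refine iSup₂_le ?_
          intro j hj
          rw [Finset.mem_range] at hj
          rintro _ ⟨w, rfl⟩
          rw [Submodule.mem_comap, hLapply]
          rcases Nat.lt_or_ge j (q + 1) with hjq | hjq
          · -- j ≤ q
            set f : ℕ → C ((m + 1) + 1) := fun i =>
              ((-1 : k) ^ i) • s (m + 1) (q + 1) (d (m + 1) i (s (m + 1) j w)) with hf
            have hsum : ∑ i ∈ Finset.range (q + 2), f i
                = f j + (f (j + 1) +
                  ∑ i ∈ ((Finset.range (q + 2)).erase j).erase (j + 1), f i) := by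
              rw [Finset.add_sum_erase _ f
                (Finset.mem_erase.2 ⟨by omega, Finset.mem_range.2 (by omega)⟩),
                Finset.add_sum_erase _ f (Finset.mem_range.2 (by omega))]
            have hdjj : d (m + 1) j (s (m + 1) j w) = w := by
              simpa using LinearMap.congr_fun (hds_id m j (by omega)).1 w
            have hfj : f j = ((-1 : k) ^ j) • s (m + 1) (q + 1) w := by
              rw [hf]
              simp only
              rw [hdjj]
            have hfj1 : f (j + 1) = -(((-1 : k) ^ j) • s (m + 1) (q + 1) w) := by
              rw [hf]
              simp only
              have : d (m + 1) (j + 1) (s (m + 1) j w) = w := by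
                simpa using LinearMap.congr_fun (hds_id m j (by omega)).2 w
              rw [this, pow_succ, mul_neg_one, neg_smul]
            rw [hsum, ← add_assoc, hfj, hfj1, add_neg_cancel, zero_add]
            refine Submodule.sub_mem _ (hmemF q j (by omega) ⟨w, rfl⟩)
              (Submodule.smul_mem _ _ (Submodule.sum_mem _ ?_))
            intro i hi
            rw [Finset.mem_erase, Finset.mem_erase, Finset.mem_range] at hi
            obtain ⟨hi1, hi2, hi3⟩ := hi
            rcases Nat.lt_or_ge i j with hij | hij
            · -- i < j : f i ∈ range (s (m + 1) (j-1))
              obtain ⟨j', rfl⟩ : ∃ j', j = j' + 1 := ⟨j - 1, by omega⟩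
              have e1 : d (m + 1) i (s (m + 1) (j' + 1) w) = s m j' (d m i w) := by
                simpa using LinearMap.congr_fun
                  (hds_lt m i (j' + 1) (by omega) (by omega)) w
              have e2 : s (m + 1) (q + 1) (s m j' (d m i w))
                  = s (m + 1) j' (s m q (d m i w)) := by
                simpa using (LinearMap.congr_fun
                  (hs m j' q (by omega) (by omega)) (d m i w)).symm
              rw [hf]
              simp only
              rw [e1, e2]
              exact Submodule.smul_mem _ _ (hmemF q j' (by omega) ⟨_, rfl⟩)
            · -- j + 1 < i
              have hji : j + 1 < i := by omega
              have e1 : d (m + 1) i (s (m + 1) j w) = s m j (d m (i - 1) w) := by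
                simpa using LinearMap.congr_fun
                  (hds_gt m i j hji (by omega)) w
              have e2 : s (m + 1) (q + 1) (s m j (d m (i - 1) w))
                  = s (m + 1) j (s m q (d m (i - 1) w)) := by
                simpa using (LinearMap.congr_fun
                  (hs m j q (by omega) (by omega)) (d m (i - 1) w)).symm
              rw [hf]
              simp only
              rw [e1, e2]
              exact Submodule.smul_mem _ _ (hmemF q j (by omega) ⟨_, rfl⟩)
          · -- j = q + 1
            have hj1 : j = q + 1 := by omega
            subst hj1
            rw [Finset.sum_range_succ
              (fun i => ((-1 : k) ^ i) • s (m + 1) (q + 1) (d (m + 1) i (s (m + 1) (q + 1) w))) (q + 1)]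
            have hid : d (m + 1) (q + 1) (s (m + 1) (q + 1) w) = w := by
              simpa using LinearMap.congr_fun (hds_id m (q + 1) (by omega)).1 w
            rw [hid, smul_add, smul_smul, ← hc, hcc, one_smul,
              sub_add_eq_sub_sub, sub_right_comm, sub_self, zero_sub]
            refine Submodule.neg_mem _ (Submodule.smul_mem _ _ (Submodule.sum_mem _ ?_))
            intro i hi
            rw [Finset.mem_range] at hi
            have e1 : d (m + 1) i (s (m + 1) (q + 1) w) = s m q (d m i w) := by
              simpa using LinearMap.congr_fun
                (hds_lt m i (q + 1) (by omega) (by omega)) w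
            have e2 : s (m + 1) (q + 1) (s m q (d m i w)) = s (m + 1) q (s m q (d m i w)) := by
              simpa using (LinearMap.congr_fun
                (hs m q q le_rfl (by omega)) (d m i w)).symm
            rw [e1, e2]
            exact Submodule.smul_mem _ _ (hmemF q q (by omega) ⟨_, rfl⟩)
        intro z hz
        exact hle hz
      -- decompose
      set x' : C ((m + 1) + 1) := x - c • sBdry d ((m + 1) + 1) (s ((m + 1) + 1) (q + 1) x) with hx'
      have hx'F : x' ∈ (⨆ i ∈ Finset.range (q + 1), LinearMap.range (s (m + 1) i)) := by
        have h1 : x' = L x - c • S1 := by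
          rw [hx', hB, hLapply, ← hS2, smul_add]
          abel
        rw [h1]
        refine Submodule.sub_mem _ (hLF x hx) (Submodule.smul_mem _ _ ?_)
        rw [hS1]
        refine Submodule.sum_mem _ ?_
        intro i hi
        exact Submodule.smul_mem _ _ (hmemF q q (by omega) ⟨_, rfl⟩)
      have hx'b : sBdry d (m + 1) x' = 0 := by
        rw [hx', map_sub, hbx, map_smul,
          bdry_bdry d hd (m + 1) (s ((m + 1) + 1) (q + 1) x), smul_zero, sub_zero]
      obtain ⟨y₂, hy₂G, hy₂⟩ := IH (by omega) x' hx'F hx'b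
      refine ⟨c • s ((m + 1) + 1) (q + 1) x + y₂,
        Submodule.add_mem _ (Submodule.smul_mem _ _ (hmemG (q + 1) (by omega) ⟨x, rfl⟩))
          hy₂G, ?_⟩
      rw [map_add, map_smul, hy₂, hx']
      abel
  exact key n le_rfl x hx hbx

end Aux



/-- Eilenberg–Mac Lane: for a simplicial module, `(∂sₚ + sₚ∂)sₚ ≡ (−1)ᵖsₚ` modulo
`s_{p−1}(C)`, i.e. `sₚ` is a chain homotopy between `(−1)ᵖId` and `0` on the graded piece
of the degenerate filtration; consequently the degenerate subcomplex `(C^D, ∂)` is acyclic. -/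
theorem stmt16 {k : Type*} [CommRing k] {C : ℕ → Type*}
    [∀ n, AddCommGroup (C n)] [∀ n, Module k (C n)]
    (d : ∀ n, ℕ → (C (n + 1) →ₗ[k] C n))
    (s : ∀ n, ℕ → (C n →ₗ[k] C (n + 1)))
    (hd : ∀ n, ∀ i j : ℕ, i < j → j ≤ n + 2 →
      (d n i) ∘ₗ (d (n + 1) j) = (d n (j - 1)) ∘ₗ (d (n + 1) i))
    (hs : ∀ n, ∀ i j : ℕ, i ≤ j → j ≤ n →
      (s (n + 1) i) ∘ₗ (s n j) = (s (n + 1) (j + 1)) ∘ₗ (s n i))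
    (hds_lt : ∀ n, ∀ i j : ℕ, i < j → j ≤ n + 1 →
      (d (n + 1) i) ∘ₗ (s (n + 1) j) = (s n (j - 1)) ∘ₗ (d n i))
    (hds_gt : ∀ n, ∀ i j : ℕ, j + 1 < i → i ≤ n + 2 →
      (d (n + 1) i) ∘ₗ (s (n + 1) j) = (s n j) ∘ₗ (d n (i - 1)))
    -- (4): dᵢsᵢ = d_{i+1}sᵢ = Id
    (hds_id : ∀ n, ∀ i : ℕ, i ≤ n + 1 →
      (d (n + 1) i) ∘ₗ (s (n + 1) i) = LinearMap.id ∧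
      (d (n + 1) (i + 1)) ∘ₗ (s (n + 1) i) = LinearMap.id) :
    -- (∂sₚ + sₚ∂)sₚ ≡ (−1)ᵖ sₚ  mod  s_{p−1}(C)
    (∀ n, ∀ p : ℕ, p ≤ n → ∀ x : C n,
      ((sBdry d (n + 1)) ((s (n + 1) p) ((s n p) x)) +
          (s n p) ((sBdry d n) ((s n p) x))) - ((-1 : k) ^ p) • ((s n p) x) ∈
        LinearMap.range (s n (p - 1))) ∧
    -- the degenerate subcomplex is acyclic
    (∀ n, ∀ x : C (n + 1),
      x ∈ (⨆ i ∈ Finset.range (n + 1), LinearMap.range (s n i)) →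
      sBdry d n x = 0 →
      ∃ y ∈ (⨆ i ∈ Finset.range (n + 2), LinearMap.range (s (n + 1) i)),
        sBdry d (n + 1) y = x) := by
  constructor
  · intro n p hp x
    exact part1 d s hs hds_lt hds_gt hds_id n p hp x
  · intro n x hx hbx
    exact part2 d s hd hs hds_lt hds_gt hds_id n x hx hbx
end

section
/- Let (Cₙ, dᵢ, sᵢ) be a very weak simplicial module (axioms (1)-(3) of a simplicial module, without any relation between dᵢsᵢ and d_{i+1}sᵢ) and set tᵢ = dᵢsᵢ − d_{i+1}sᵢ : Cₙ → Cₙ. Then: (a) dᵢtⱼ = t_{j−1}dᵢ for i<j, dᵢtᵢ = 0, and dᵢtⱼ = tⱼdᵢ for i>j+1 [suitably interpreted]; (b) tᵢtⱼ = tⱼtᵢ for all i,j; and (c) tᵢsⱼ = sⱼtᵢ for i<j. -/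
/-- `tᵢ = dᵢsᵢ − d_{i+1}sᵢ : C_{m+1} → C_{m+1}` (valid for `i ≤ m+1`). -/
def tmap {k : Type*} [CommRing k] {C : ℕ → Type*}
    [∀ n, AddCommGroup (C n)] [∀ n, Module k (C n)]
    (d : ∀ n, ℕ → (C (n + 1) →ₗ[k] C n))
    (s : ∀ n, ℕ → (C n →ₗ[k] C (n + 1)))
    (m i : ℕ) : C (m + 1) →ₗ[k] C (m + 1) :=
  (d (m + 1) i) ∘ₗ (s (m + 1) i) - (d (m + 1) (i + 1)) ∘ₗ (s (m + 1) i)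

section Aux

variable {k : Type*} [CommRing k] {C : ℕ → Type*}
    [∀ n, AddCommGroup (C n)] [∀ n, Module k (C n)]
    (d : ∀ n, ℕ → (C (n + 1) →ₗ[k] C n))
    (s : ∀ n, ℕ → (C n →ₗ[k] C (n + 1)))

theorem aux_a1
    (hd : ∀ n, ∀ i j : ℕ, i < j → j ≤ n + 2 →
      (d n i) ∘ₗ (d (n + 1) j) = (d n (j - 1)) ∘ₗ (d (n + 1) i))
    (hds_lt : ∀ n, ∀ i j : ℕ, i < j → j ≤ n + 1 →
      (d (n + 1) i) ∘ₗ (s (n + 1) j) = (s n (j - 1)) ∘ₗ (d n i)) :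
    ∀ n, ∀ i j : ℕ, i < j → j ≤ n + 2 →
      (d (n + 1) i) ∘ₗ (tmap d s (n + 1) j) = (tmap d s n (j - 1)) ∘ₗ (d (n + 1) i) := by
  intro n i j hij hj
  obtain ⟨j, rfl⟩ : ∃ j', j = j' + 1 := ⟨j - 1, by omega⟩
  have h1 := hd (n + 1) i (j + 1) hij (by omega)
  have h2 := hd (n + 1) i (j + 2) (by omega) (by omega)
  have h3 := hds_lt (n + 1) i (j + 1) hij (by omega)
  have e : j + 2 - 1 = j + 1 := by omega
  rw [e] at h2
  simp only [Nat.add_sub_cancel] at h1 h3 ⊢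
  simp only [tmap, LinearMap.comp_sub, LinearMap.sub_comp]
  congr 1
  · rw [← LinearMap.comp_assoc, h1, LinearMap.comp_assoc, h3, ← LinearMap.comp_assoc]
  · rw [← LinearMap.comp_assoc, h2, LinearMap.comp_assoc, h3, ← LinearMap.comp_assoc]

theorem aux_a2
    (hd : ∀ n, ∀ i j : ℕ, i < j → j ≤ n + 2 →
      (d n i) ∘ₗ (d (n + 1) j) = (d n (j - 1)) ∘ₗ (d (n + 1) i)) :
    ∀ n, ∀ i : ℕ, i ≤ n + 2 →
      (d (n + 1) i) ∘ₗ (tmap d s (n + 1) i) = 0 := by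
  intro n i hi
  have h1 := hd (n + 1) i (i + 1) (by omega) (by omega)
  simp only [Nat.add_sub_cancel] at h1
  simp only [tmap, LinearMap.comp_sub]
  rw [← LinearMap.comp_assoc, ← LinearMap.comp_assoc, h1, sub_self]

/-- `dᵢ tⱼ = tⱼ dᵢ` for all `i > j` (including `i = j + 1`). -/
theorem aux_gt
    (hd : ∀ n, ∀ i j : ℕ, i < j → j ≤ n + 2 →
      (d n i) ∘ₗ (d (n + 1) j) = (d n (j - 1)) ∘ₗ (d (n + 1) i))
    (hds_gt : ∀ n, ∀ i j : ℕ, j + 1 < i → i ≤ n + 2 →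
      (d (n + 1) i) ∘ₗ (s (n + 1) j) = (s n j) ∘ₗ (d n (i - 1))) :
    ∀ n, ∀ i j : ℕ, j < i → i ≤ n + 2 → j ≤ n + 1 →
      (d (n + 1) i) ∘ₗ (tmap d s (n + 1) j) = (tmap d s n j) ∘ₗ (d (n + 1) i) := by
  intro n i j hij hi hj
  have h1 := hd (n + 1) j (i + 1) (by omega) (by omega)
  have h2 := hd (n + 1) (j + 1) (i + 1) (by omega) (by omega)
  have h3 := hds_gt (n + 1) (i + 1) j (by omega) (by omega)
  simp only [Nat.add_sub_cancel] at h1 h2 h3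
  simp only [tmap, LinearMap.comp_sub, LinearMap.sub_comp]
  congr 1
  · rw [← LinearMap.comp_assoc, ← h1, LinearMap.comp_assoc, h3, ← LinearMap.comp_assoc]
  · rw [← LinearMap.comp_assoc, ← h2, LinearMap.comp_assoc, h3, ← LinearMap.comp_assoc]

theorem aux_c
    (hs : ∀ n, ∀ i j : ℕ, i ≤ j → j ≤ n →
      (s (n + 1) i) ∘ₗ (s n j) = (s (n + 1) (j + 1)) ∘ₗ (s n i))
    (hds_lt : ∀ n, ∀ i j : ℕ, i < j → j ≤ n + 1 →
      (d (n + 1) i) ∘ₗ (s (n + 1) j) = (s n (j - 1)) ∘ₗ (d n i)) :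
    ∀ m, ∀ i j : ℕ, i < j → j ≤ m + 1 →
      (tmap d s (m + 1) i) ∘ₗ (s (m + 1) j) = (s (m + 1) j) ∘ₗ (tmap d s m i) := by
  intro m i j hij hj
  have h1 := hs (m + 1) i j (le_of_lt hij) hj
  have h2 := hds_lt (m + 1) i (j + 1) (by omega) (by omega)
  have h3 := hds_lt (m + 1) (i + 1) (j + 1) (by omega) (by omega)
  simp only [Nat.add_sub_cancel] at h2 h3
  simp only [tmap, LinearMap.comp_sub, LinearMap.sub_comp]
  congr 1
  · rw [LinearMap.comp_assoc, h1, ← LinearMap.comp_assoc, h2, LinearMap.comp_assoc]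
  · rw [LinearMap.comp_assoc, h1, ← LinearMap.comp_assoc, h3, LinearMap.comp_assoc]

theorem aux_b
    (hd : ∀ n, ∀ i j : ℕ, i < j → j ≤ n + 2 →
      (d n i) ∘ₗ (d (n + 1) j) = (d n (j - 1)) ∘ₗ (d (n + 1) i))
    (hs : ∀ n, ∀ i j : ℕ, i ≤ j → j ≤ n →
      (s (n + 1) i) ∘ₗ (s n j) = (s (n + 1) (j + 1)) ∘ₗ (s n i))
    (hds_lt : ∀ n, ∀ i j : ℕ, i < j → j ≤ n + 1 →
      (d (n + 1) i) ∘ₗ (s (n + 1) j) = (s n (j - 1)) ∘ₗ (d n i))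
    (hds_gt : ∀ n, ∀ i j : ℕ, j + 1 < i → i ≤ n + 2 →
      (d (n + 1) i) ∘ₗ (s (n + 1) j) = (s n j) ∘ₗ (d n (i - 1))) :
    ∀ m, ∀ i j : ℕ, i < j → j ≤ m + 1 →
      (tmap d s m j) ∘ₗ (tmap d s m i) = (tmap d s m i) ∘ₗ (tmap d s m j) := by
  intro m i j hij hj
  have hc := aux_c d s hs hds_lt m i j hij hj
  have hg1 := aux_gt d s hd hds_gt m j i hij (by omega) (by omega)
  have hg2 := aux_gt d s hd hds_gt m (j + 1) i (by omega) (by omega) (by omega)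
  calc (tmap d s m j) ∘ₗ (tmap d s m i)
      = (d (m + 1) j) ∘ₗ ((s (m + 1) j) ∘ₗ (tmap d s m i))
        - (d (m + 1) (j + 1)) ∘ₗ ((s (m + 1) j) ∘ₗ (tmap d s m i)) := by
        simp only [tmap, LinearMap.sub_comp, LinearMap.comp_assoc]
    _ = ((d (m + 1) j) ∘ₗ (tmap d s (m + 1) i)) ∘ₗ (s (m + 1) j)
        - ((d (m + 1) (j + 1)) ∘ₗ (tmap d s (m + 1) i)) ∘ₗ (s (m + 1) j) := by
        rw [← hc]; simp only [LinearMap.comp_assoc]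
    _ = ((tmap d s m i) ∘ₗ (d (m + 1) j)) ∘ₗ (s (m + 1) j)
        - ((tmap d s m i) ∘ₗ (d (m + 1) (j + 1))) ∘ₗ (s (m + 1) j) := by
        rw [hg1, hg2]
    _ = (tmap d s m i) ∘ₗ (tmap d s m j) := by
        simp only [tmap, LinearMap.comp_sub, LinearMap.comp_assoc]

end Aux

/-- For a very weak simplicial module `(Cₙ, dᵢ, sᵢ)` and `tᵢ = dᵢsᵢ − d_{i+1}sᵢ`:
(a) `dᵢtⱼ = t_{j−1}dᵢ` for `i < j`, `dᵢtᵢ = 0` and `dᵢtⱼ = tⱼdᵢ` for `i > j+1`;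
(b) `tᵢtⱼ = tⱼtᵢ`; (c) `tᵢsⱼ = sⱼtᵢ` for `i < j`. -/
theorem stmt18 {k : Type*} [CommRing k] {C : ℕ → Type*}
    [∀ n, AddCommGroup (C n)] [∀ n, Module k (C n)]
    (d : ∀ n, ℕ → (C (n + 1) →ₗ[k] C n))
    (s : ∀ n, ℕ → (C n →ₗ[k] C (n + 1)))
    (hd : ∀ n, ∀ i j : ℕ, i < j → j ≤ n + 2 →
      (d n i) ∘ₗ (d (n + 1) j) = (d n (j - 1)) ∘ₗ (d (n + 1) i))
    (hs : ∀ n, ∀ i j : ℕ, i ≤ j → j ≤ n →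
      (s (n + 1) i) ∘ₗ (s n j) = (s (n + 1) (j + 1)) ∘ₗ (s n i))
    (hds_lt : ∀ n, ∀ i j : ℕ, i < j → j ≤ n + 1 →
      (d (n + 1) i) ∘ₗ (s (n + 1) j) = (s n (j - 1)) ∘ₗ (d n i))
    (hds_gt : ∀ n, ∀ i j : ℕ, j + 1 < i → i ≤ n + 2 →
      (d (n + 1) i) ∘ₗ (s (n + 1) j) = (s n j) ∘ₗ (d n (i - 1))) :
    -- (a) dᵢtⱼ = t_{j−1}dᵢ for i < j
    (∀ n, ∀ i j : ℕ, i < j → j ≤ n + 2 →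
      (d (n + 1) i) ∘ₗ (tmap d s (n + 1) j) = (tmap d s n (j - 1)) ∘ₗ (d (n + 1) i)) ∧
    -- (a) dᵢtᵢ = 0
    (∀ n, ∀ i : ℕ, i ≤ n + 2 →
      (d (n + 1) i) ∘ₗ (tmap d s (n + 1) i) = 0) ∧
    -- (a) dᵢtⱼ = tⱼdᵢ for i > j + 1
    (∀ n, ∀ i j : ℕ, j + 1 < i → i ≤ n + 2 → j ≤ n + 1 →
      (d (n + 1) i) ∘ₗ (tmap d s (n + 1) j) = (tmap d s n j) ∘ₗ (d (n + 1) i)) ∧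
    -- (b) tᵢtⱼ = tⱼtᵢ
    (∀ m, ∀ i j : ℕ, i ≤ m + 1 → j ≤ m + 1 →
      (tmap d s m i) ∘ₗ (tmap d s m j) = (tmap d s m j) ∘ₗ (tmap d s m i)) ∧
    -- (c) tᵢsⱼ = sⱼtᵢ for i < j
    (∀ m, ∀ i j : ℕ, i < j → j ≤ m + 1 →
      (tmap d s (m + 1) i) ∘ₗ (s (m + 1) j) = (s (m + 1) j) ∘ₗ (tmap d s m i)) := by
  refine ⟨aux_a1 d s hd hds_lt, aux_a2 d s hd, ?_, ?_, aux_c d s hs hds_lt⟩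
  · intro n i j h1 h2 h3
    exact aux_gt d s hd hds_gt n i j (by omega) h2 h3
  · intro m i j hi hj
    rcases lt_trichotomy i j with h | h | h
    · exact (aux_b d s hd hs hds_lt hds_gt m i j h hj).symm
    · rw [h]
    · exact aux_b d s hd hs hds_lt hds_gt m j i h hi
end
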